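/- Let F be a field, V an invertible 4×4 matrix over F, and X a symmetric 4×4 matrix over F. Let P be the first row of V, L the 2×4 matrix formed by the first two rows of V, and H the 3×4 matrix formed by the first three rows of V. Write det(V⁻¹ · diag(ε³,ε²,ε,1) · (V⁻¹)ᵀ + tX) = Σ_{k=0}^{4} c_k(ε) t^k in F[ε][t], and set D(ε) = Δ(c₀(ε), c₁(ε), c₂(ε), c₃(ε), c₄(ε)) ∈ F[ε]. Then the coefficients of ε⁰, ε¹, …, ε⁷ in D(ε) are all zero, and the coefficient of ε⁸ in D(ε) equals (det V)⁻¹² · (P X Pᵀ)² · det(L X Lᵀ)² · det(H X Hᵀ)². -/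

import Mathlib

open Polynomial Matrix

/-- The discriminant of the quartic `c₄t⁴ + c₃t³ + c₂t² + c₁t + c₀`. -/
def quarticDisc {R : Type*} [CommRing R] (c0 c1 c2 c3 c4 : R) : R :=
  256*c0^3*c4^3 - 192*c0^2*c1*c3*c4^2 - 128*c0^2*c2^2*c4^2 + 144*c0^2*c2*c3^2*c4
    - 27*c0^2*c3^4 + 144*c0*c1^2*c2*c4^2 - 6*c0*c1^2*c3^2*c4 - 80*c0*c1*c2^2*c3*c4
    + 18*c0*c1*c2*c3^3 + 16*c0*c2^4*c4 - 4*c0*c2^3*c3^2 - 27*c1^4*c4^2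
    + 18*c1^3*c2*c3*c4 - 4*c1^3*c3^3 - 4*c1^2*c2^3*c4 + c1^2*c2^2*c3^2

lemma disc_homog {R : Type*} [CommRing R] (a c0 c1 c2 c3 c4 : R) :
    quarticDisc (a*c0) (a*c1) (a*c2) (a*c3) (a*c4) = a^6 * quarticDisc c0 c1 c2 c3 c4 := by
  simp only [quarticDisc]; ring

lemma disc_factor {R : Type*} [CommRing R] (x g1 g2 e3 e4 : R) :
    quarticDisc (x^6) (x^3*g1) (x*g2) e3 e4
      = x^8 * (256*x^10*e4^3 - 192*x^7*g1*e3*e4^2 - 128*x^6*g2^2*e4^2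
          + 144*x^5*g2*e3^2*e4 - 27*x^4*e3^4 + 144*x^5*g1^2*g2*e4^2
          - 6*x^4*g1^2*e3^2*e4 - 80*x^3*g1*g2^2*e3*e4 + 18*x^2*g1*g2*e3^3
          + 16*x^2*g2^4*e4 - 4*x*g2^3*e3^2 - 27*x^4*g1^4*e4^2
          + 18*x^2*g1^3*g2*e3*e4 - 4*x*g1^3*e3^3 - 4*x*g1^2*g2^3*e4
          + g1^2*g2^2*e3^2) := by
  simp only [quarticDisc]; ring

lemma det_fin_four' {R : Type*} [CommRing R] (M : Matrix (Fin 4) (Fin 4) R) :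
    M.det =
      M 0 0 * (M 1 1 * (M 2 2 * M 3 3 - M 2 3 * M 3 2)
             - M 1 2 * (M 2 1 * M 3 3 - M 2 3 * M 3 1)
             + M 1 3 * (M 2 1 * M 3 2 - M 2 2 * M 3 1))
    - M 0 1 * (M 1 0 * (M 2 2 * M 3 3 - M 2 3 * M 3 2)
             - M 1 2 * (M 2 0 * M 3 3 - M 2 3 * M 3 0)
             + M 1 3 * (M 2 0 * M 3 2 - M 2 2 * M 3 0))
    + M 0 2 * (M 1 0 * (M 2 1 * M 3 3 - M 2 3 * M 3 1)
             - M 1 1 * (M 2 0 * M 3 3 - M 2 3 * M 3 0)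
             + M 1 3 * (M 2 0 * M 3 1 - M 2 1 * M 3 0))
    - M 0 3 * (M 1 0 * (M 2 1 * M 3 2 - M 2 2 * M 3 1)
             - M 1 1 * (M 2 0 * M 3 2 - M 2 2 * M 3 0)
             + M 1 2 * (M 2 0 * M 3 1 - M 2 1 * M 3 0)) := by
  rw [Matrix.det_succ_row_zero, Fin.sum_univ_four]
  simp only [Matrix.det_fin_three, Matrix.submatrix_apply,
    show (Fin.succ 0 : Fin 4) = 1 from rfl,
    show (Fin.succ 1 : Fin 4) = 2 from rfl,
    show (Fin.succ 2 : Fin 4) = 3 from rfl,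
    show ((0:Fin 4).succAbove 0 : Fin 4) = 1 from rfl,
    show ((0:Fin 4).succAbove 1 : Fin 4) = 2 from rfl,
    show ((0:Fin 4).succAbove 2 : Fin 4) = 3 from rfl,
    show ((1:Fin 4).succAbove 0 : Fin 4) = 0 from rfl,
    show ((1:Fin 4).succAbove 1 : Fin 4) = 2 from rfl,
    show ((1:Fin 4).succAbove 2 : Fin 4) = 3 from rfl,
    show ((2:Fin 4).succAbove 0 : Fin 4) = 0 from rfl,
    show ((2:Fin 4).succAbove 1 : Fin 4) = 1 from rfl,
    show ((2:Fin 4).succAbove 2 : Fin 4) = 3 from rfl,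
    show ((3:Fin 4).succAbove 0 : Fin 4) = 0 from rfl,
    show ((3:Fin 4).succAbove 1 : Fin 4) = 1 from rfl,
    show ((3:Fin 4).succAbove 2 : Fin 4) = 2 from rfl,
    Fin.val_zero, Fin.val_one, Fin.val_two,
    show ((3:Fin 4):ℕ) = 3 from rfl,
    pow_zero, pow_one, pow_succ, neg_mul, one_mul, neg_neg]
  ring

lemma detN {R : Type*} [CommRing R] (d0 d1 d2 d3 : R) (b : Matrix (Fin 4) (Fin 4) R) :
    ((Matrix.diagonal ![d0,d1,d2,d3]).map Polynomial.C
      + (Polynomial.X : Polynomial R) • b.map Polynomial.C).det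
    = C (d0*d1*d2*d3)
      + C (d1*d2*d3*(b 0 0) + d0*d2*d3*(b 1 1) + d0*d1*d3*(b 2 2) + d0*d1*d2*(b 3 3)) * X
      + C ( d2*d3*(b 0 0*b 1 1 - b 0 1*b 1 0) + d1*d3*(b 0 0*b 2 2 - b 0 2*b 2 0)
          + d1*d2*(b 0 0*b 3 3 - b 0 3*b 3 0) + d0*d3*(b 1 1*b 2 2 - b 1 2*b 2 1)
          + d0*d2*(b 1 1*b 3 3 - b 1 3*b 3 1) + d0*d1*(b 2 2*b 3 3 - b 2 3*b 3 2)) * X^2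
      + C ( d3 * (b 0 0*(b 1 1*b 2 2 - b 1 2*b 2 1) - b 0 1*(b 1 0*b 2 2 - b 1 2*b 2 0)
                  + b 0 2*(b 1 0*b 2 1 - b 1 1*b 2 0))
          + d2 * (b 0 0*(b 1 1*b 3 3 - b 1 3*b 3 1) - b 0 1*(b 1 0*b 3 3 - b 1 3*b 3 0)
                  + b 0 3*(b 1 0*b 3 1 - b 1 1*b 3 0))
          + d1 * (b 0 0*(b 2 2*b 3 3 - b 2 3*b 3 2) - b 0 2*(b 2 0*b 3 3 - b 2 3*b 3 0)
                  + b 0 3*(b 2 0*b 3 2 - b 2 2*b 3 0))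
          + d0 * (b 1 1*(b 2 2*b 3 3 - b 2 3*b 3 2) - b 1 2*(b 2 1*b 3 3 - b 2 3*b 3 1)
                  + b 1 3*(b 2 1*b 3 2 - b 2 2*b 3 1))) * X^3
      + C ( b 0 0*(b 1 1*(b 2 2*b 3 3 - b 2 3*b 3 2) - b 1 2*(b 2 1*b 3 3 - b 2 3*b 3 1)
                  + b 1 3*(b 2 1*b 3 2 - b 2 2*b 3 1))
          - b 0 1*(b 1 0*(b 2 2*b 3 3 - b 2 3*b 3 2) - b 1 2*(b 2 0*b 3 3 - b 2 3*b 3 0)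
                  + b 1 3*(b 2 0*b 3 2 - b 2 2*b 3 0))
          + b 0 2*(b 1 0*(b 2 1*b 3 3 - b 2 3*b 3 1) - b 1 1*(b 2 0*b 3 3 - b 2 3*b 3 0)
                  + b 1 3*(b 2 0*b 3 1 - b 2 1*b 3 0))
          - b 0 3*(b 1 0*(b 2 1*b 3 2 - b 2 2*b 3 1) - b 1 1*(b 2 0*b 3 2 - b 2 2*b 3 0)
                  + b 1 2*(b 2 0*b 3 1 - b 2 1*b 3 0))) * X^4 := by
  rw [det_fin_four']
  simp only [Matrix.add_apply, Matrix.smul_apply, Matrix.map_apply, smul_eq_mul,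
    Matrix.diagonal_apply_eq,
    Matrix.diagonal_apply_ne _ (by decide : (0:Fin 4) ≠ 1),
    Matrix.diagonal_apply_ne _ (by decide : (0:Fin 4) ≠ 2),
    Matrix.diagonal_apply_ne _ (by decide : (0:Fin 4) ≠ 3),
    Matrix.diagonal_apply_ne _ (by decide : (1:Fin 4) ≠ 0),
    Matrix.diagonal_apply_ne _ (by decide : (1:Fin 4) ≠ 2),
    Matrix.diagonal_apply_ne _ (by decide : (1:Fin 4) ≠ 3),
    Matrix.diagonal_apply_ne _ (by decide : (2:Fin 4) ≠ 0),
    Matrix.diagonal_apply_ne _ (by decide : (2:Fin 4) ≠ 1),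
    Matrix.diagonal_apply_ne _ (by decide : (2:Fin 4) ≠ 3),
    Matrix.diagonal_apply_ne _ (by decide : (3:Fin 4) ≠ 0),
    Matrix.diagonal_apply_ne _ (by decide : (3:Fin 4) ≠ 1),
    Matrix.diagonal_apply_ne _ (by decide : (3:Fin 4) ≠ 2),
    Matrix.cons_val_zero, Matrix.cons_val_one, Matrix.head_cons,
    Matrix.cons_val_two, Matrix.tail_cons, Matrix.cons_val_three,
    C_add, C_mul, C_sub, C_0, zero_add, add_zero]
  ring

section coeff5
variable {R : Type*} [CommRing R] (e0 e1 e2 e3 e4 : R)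

lemma coeff5_0 : (C e0 + C e1 * X + C e2*X^2 + C e3*X^3 + C e4*X^4 : R[X]).coeff 0 = e0 := by
  simp [coeff_add, coeff_C_mul, coeff_X_pow, coeff_C]

lemma coeff5_1 : (C e0 + C e1 * X + C e2*X^2 + C e3*X^3 + C e4*X^4 : R[X]).coeff 1 = e1 := by
  simp [coeff_add, coeff_C_mul, coeff_X_pow, coeff_C]

lemma coeff5_2 : (C e0 + C e1 * X + C e2*X^2 + C e3*X^3 + C e4*X^4 : R[X]).coeff 2 = e2 := by
  simp [coeff_add, coeff_C_mul, coeff_X_pow, coeff_C]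

lemma coeff5_3 : (C e0 + C e1 * X + C e2*X^2 + C e3*X^3 + C e4*X^4 : R[X]).coeff 3 = e3 := by
  simp [coeff_add, coeff_C_mul, coeff_X_pow, coeff_C]

lemma coeff5_4 : (C e0 + C e1 * X + C e2*X^2 + C e3*X^3 + C e4*X^4 : R[X]).coeff 4 = e4 := by
  simp [coeff_add, coeff_C_mul, coeff_X_pow, coeff_C]

end coeff5

set_option maxHeartbeats 1000000 in
/-- Let `F` be a field, `V` an invertible 4×4 matrix over `F`, and
`X` a symmetric 4×4 matrix over `F`.  Let `P`, `L`, `H` be the first row, the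
first two rows, and the first three rows of `V`.  Writing
`det(V⁻¹·diag(ε³,ε²,ε,1)·(V⁻¹)ᵀ + tX) = Σ c_k(ε) tᵏ` in `F[ε][t]` and setting
`D(ε) = Δ(c₀,…,c₄) ∈ F[ε]`, the coefficients of `ε⁰,…,ε⁷` in `D(ε)` all vanish,
and the coefficient of `ε⁸` equals
`(det V)⁻¹² · (P X Pᵀ)² · det(L X Lᵀ)² · det(H X Hᵀ)²`. -/
theorem hurwitz_leading_form {F : Type*} [Field F]
    (V : Matrix (Fin 4) (Fin 4) F) (hV : IsUnit V.det)
    (A : Matrix (Fin 4) (Fin 4) F) (hA : A.IsSymm) :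
    let P : Fin 4 → F := V 0
    let L : Matrix (Fin 2) (Fin 4) F := V.submatrix ![0, 1] id
    let H : Matrix (Fin 3) (Fin 4) F := V.submatrix ![0, 1, 2] id
    let U : Matrix (Fin 4) (Fin 4) (Polynomial F) :=
      (V⁻¹).map Polynomial.C
        * Matrix.diagonal ![Polynomial.X ^ 3, Polynomial.X ^ 2, Polynomial.X, 1]
        * ((V⁻¹)ᵀ).map Polynomial.C
    let M : Matrix (Fin 4) (Fin 4) (Polynomial (Polynomial F)) :=
      U.map Polynomial.C
        + (Polynomial.X : Polynomial (Polynomial F)) •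
            A.map (fun a => Polynomial.C (Polynomial.C a))
    let c : ℕ → Polynomial F := fun k => M.det.coeff k
    let D : Polynomial F := quarticDisc (c 0) (c 1) (c 2) (c 3) (c 4)
    (∀ k < 8, D.coeff k = 0)
    ∧ D.coeff 8 =
        (V.det)⁻¹ ^ 12 * (P ⬝ᵥ A.mulVec P) ^ 2
          * ((L * A * Lᵀ).det) ^ 2 * ((H * A * Hᵀ).det) ^ 2 := by
  intro P L H U M c D
  obtain ⟨B, hB⟩ : ∃ B : Matrix (Fin 4) (Fin 4) F, B = V * A * Vᵀ := ⟨_, rfl⟩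
  obtain ⟨W, hW⟩ : ∃ W : Matrix (Fin 4) (Fin 4) (Polynomial (Polynomial F)),
      W = ((V⁻¹).map Polynomial.C).map Polynomial.C := ⟨_, rfl⟩
  obtain ⟨N, hN⟩ : ∃ N : Matrix (Fin 4) (Fin 4) (Polynomial (Polynomial F)),
      N = (Matrix.diagonal ![(X : Polynomial F)^3, X^2, X, 1]).map Polynomial.C
        + (X : Polynomial (Polynomial F)) • (B.map Polynomial.C).map Polynomial.C := ⟨_, rfl⟩
  have hVV : V⁻¹ * V = 1 := Matrix.nonsing_inv_mul V hV
  have hmap2 : ∀ (G : Matrix (Fin 4) (Fin 4) F),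
      G.map (fun a => Polynomial.C (Polynomial.C a))
        = (G.map Polynomial.C).map Polynomial.C := by
    intro G; rw [Matrix.map_map]; rfl
  have hM : M = W * N * Wᵀ := by
    have expand : W * N * Wᵀ
        = W * (Matrix.diagonal ![(X : Polynomial F)^3, X^2, X, 1]).map Polynomial.C * Wᵀ
          + (X : Polynomial (Polynomial F)) • (W * ((B.map Polynomial.C).map Polynomial.C) * Wᵀ) := by
      rw [hN, Matrix.mul_add, Matrix.add_mul, Matrix.mul_smul, Matrix.smul_mul]
    rw [expand]
    have h1 : U.map Polynomial.C
        = W * (Matrix.diagonal ![(X : Polynomial F)^3, X^2, X, 1]).map Polynomial.C * Wᵀ := by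
      show (((V⁻¹).map Polynomial.C
        * Matrix.diagonal ![(X : Polynomial F) ^ 3, X ^ 2, X, 1]
        * ((V⁻¹)ᵀ).map Polynomial.C).map Polynomial.C) = _
      rw [Matrix.map_mul (f := (Polynomial.C : Polynomial F →+* Polynomial (Polynomial F))),
          Matrix.map_mul (f := (Polynomial.C : Polynomial F →+* Polynomial (Polynomial F))),
          hW, Matrix.transpose_map, Matrix.transpose_map]
    have e1 : W * ((V.map Polynomial.C).map Polynomial.C) = 1 := by
      rw [hW, ← Matrix.map_mul (f := (Polynomial.C : Polynomial F →+* Polynomial (Polynomial F))),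
          ← Matrix.map_mul (f := (Polynomial.C : F →+* Polynomial F)),
          hVV, Matrix.map_one _ C_0 C_1, Matrix.map_one _ C_0 C_1]
    have e2 : ((Vᵀ.map Polynomial.C).map Polynomial.C) * Wᵀ = 1 := by
      rw [hW, ← Matrix.transpose_map, ← Matrix.transpose_map,
          ← Matrix.map_mul (f := (Polynomial.C : Polynomial F →+* Polynomial (Polynomial F))),
          ← Matrix.map_mul (f := (Polynomial.C : F →+* Polynomial F)),
          ← Matrix.transpose_mul, hVV, Matrix.transpose_one,
          Matrix.map_one _ C_0 C_1, Matrix.map_one _ C_0 C_1]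
    have h2 : W * ((B.map Polynomial.C).map Polynomial.C) * Wᵀ
        = A.map (fun a => Polynomial.C (Polynomial.C a)) := by
      rw [hmap2 A, hB,
          Matrix.map_mul (f := (Polynomial.C : F →+* Polynomial F)),
          Matrix.map_mul (f := (Polynomial.C : F →+* Polynomial F)),
          Matrix.map_mul (f := (Polynomial.C : Polynomial F →+* Polynomial (Polynomial F))),
          Matrix.map_mul (f := (Polynomial.C : Polynomial F →+* Polynomial (Polynomial F)))]
      calc W * ((V.map Polynomial.C).map Polynomial.C * (A.map Polynomial.C).map Polynomial.C
              * (Vᵀ.map Polynomial.C).map Polynomial.C) * Wᵀ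
          = (W * ((V.map Polynomial.C).map Polynomial.C))
              * (A.map Polynomial.C).map Polynomial.C
              * (((Vᵀ.map Polynomial.C).map Polynomial.C) * Wᵀ) := by
            rw [← Matrix.mul_assoc, ← Matrix.mul_assoc, Matrix.mul_assoc]
        _ = (A.map Polynomial.C).map Polynomial.C := by rw [e1, e2, Matrix.one_mul, Matrix.mul_one]
    rw [← h1, h2]
  have hWdet : W.det = Polynomial.C (Polynomial.C (V.det⁻¹)) := by
    rw [hW]
    calc (((V⁻¹).map Polynomial.C).map Polynomial.C).det
        = (((Polynomial.C : Polynomial F →+* Polynomial (Polynomial F)).mapMatrix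
            ((Polynomial.C : F →+* Polynomial F).mapMatrix V⁻¹)).det) := rfl
      _ = Polynomial.C ((((Polynomial.C : F →+* Polynomial F).mapMatrix V⁻¹)).det) :=
            (RingHom.map_det _ _).symm
      _ = Polynomial.C (Polynomial.C ((V⁻¹).det)) := by rw [← RingHom.map_det]
      _ = Polynomial.C (Polynomial.C (V.det⁻¹)) := by
            rw [Matrix.det_nonsing_inv, Ring.inverse_eq_inv]
  have hMdet : M.det = Polynomial.C ((Polynomial.C (V.det⁻¹))^2) * N.det := by
    rw [hM, Matrix.det_mul, Matrix.det_mul, Matrix.det_transpose, hWdet, map_pow]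
    ring
  have hck : ∀ k, c k = (Polynomial.C (V.det⁻¹))^2 * N.det.coeff k := by
    intro k
    show M.det.coeff k = _
    rw [hMdet, Polynomial.coeff_C_mul]
  have hNd := detN ((X : Polynomial F)^3) (X^2) X 1 (B.map Polynomial.C)
  rw [← hN] at hNd
  simp only [Matrix.map_apply] at hNd
  obtain ⟨g1, hg1⟩ : ∃ g : Polynomial F,
      g = C (B 0 0) + X * C (B 1 1) + X^2 * C (B 2 2) + X^3 * C (B 3 3) := ⟨_, rfl⟩
  obtain ⟨g2, hg2⟩ : ∃ g : Polynomial F,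
      g = (C (B 0 0) * C (B 1 1) - C (B 0 1) * C (B 1 0))
        + X * (C (B 0 0) * C (B 2 2) - C (B 0 2) * C (B 2 0))
        + X^2 * ((C (B 0 0) * C (B 3 3) - C (B 0 3) * C (B 3 0))
                + (C (B 1 1) * C (B 2 2) - C (B 1 2) * C (B 2 1)))
        + X^3 * (C (B 1 1) * C (B 3 3) - C (B 1 3) * C (B 3 1))
        + X^4 * (C (B 2 2) * C (B 3 3) - C (B 2 3) * C (B 3 2)) := ⟨_, rfl⟩
  obtain ⟨e3, he3⟩ : ∃ g : Polynomial F,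
      g = (C (B 0 0)*(C (B 1 1)*C (B 2 2) - C (B 1 2)*C (B 2 1))
            - C (B 0 1)*(C (B 1 0)*C (B 2 2) - C (B 1 2)*C (B 2 0))
            + C (B 0 2)*(C (B 1 0)*C (B 2 1) - C (B 1 1)*C (B 2 0)))
        + X * (C (B 0 0)*(C (B 1 1)*C (B 3 3) - C (B 1 3)*C (B 3 1))
            - C (B 0 1)*(C (B 1 0)*C (B 3 3) - C (B 1 3)*C (B 3 0))
            + C (B 0 3)*(C (B 1 0)*C (B 3 1) - C (B 1 1)*C (B 3 0)))
        + X^2 * (C (B 0 0)*(C (B 2 2)*C (B 3 3) - C (B 2 3)*C (B 3 2))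
            - C (B 0 2)*(C (B 2 0)*C (B 3 3) - C (B 2 3)*C (B 3 0))
            + C (B 0 3)*(C (B 2 0)*C (B 3 2) - C (B 2 2)*C (B 3 0)))
        + X^3 * (C (B 1 1)*(C (B 2 2)*C (B 3 3) - C (B 2 3)*C (B 3 2))
            - C (B 1 2)*(C (B 2 1)*C (B 3 3) - C (B 2 3)*C (B 3 1))
            + C (B 1 3)*(C (B 2 1)*C (B 3 2) - C (B 2 2)*C (B 3 1))) := ⟨_, rfl⟩
  obtain ⟨e4, he4⟩ : ∃ g : Polynomial F,
      g = C (B 0 0)*(C (B 1 1)*(C (B 2 2)*C (B 3 3) - C (B 2 3)*C (B 3 2))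
            - C (B 1 2)*(C (B 2 1)*C (B 3 3) - C (B 2 3)*C (B 3 1))
            + C (B 1 3)*(C (B 2 1)*C (B 3 2) - C (B 2 2)*C (B 3 1)))
        - C (B 0 1)*(C (B 1 0)*(C (B 2 2)*C (B 3 3) - C (B 2 3)*C (B 3 2))
            - C (B 1 2)*(C (B 2 0)*C (B 3 3) - C (B 2 3)*C (B 3 0))
            + C (B 1 3)*(C (B 2 0)*C (B 3 2) - C (B 2 2)*C (B 3 0)))
        + C (B 0 2)*(C (B 1 0)*(C (B 2 1)*C (B 3 3) - C (B 2 3)*C (B 3 1))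
            - C (B 1 1)*(C (B 2 0)*C (B 3 3) - C (B 2 3)*C (B 3 0))
            + C (B 1 3)*(C (B 2 0)*C (B 3 1) - C (B 2 1)*C (B 3 0)))
        - C (B 0 3)*(C (B 1 0)*(C (B 2 1)*C (B 3 2) - C (B 2 2)*C (B 3 1))
            - C (B 1 1)*(C (B 2 0)*C (B 3 2) - C (B 2 2)*C (B 3 0))
            + C (B 1 2)*(C (B 2 0)*C (B 3 1) - C (B 2 1)*C (B 3 0))) := ⟨_, rfl⟩
  have hc0 : c 0 = (Polynomial.C (V.det⁻¹))^2 * (X^6) := by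
    rw [hck, hNd, coeff5_0]; ring
  have hc1 : c 1 = (Polynomial.C (V.det⁻¹))^2 * (X^3 * g1) := by
    rw [hck, hNd, coeff5_1, hg1]; ring
  have hc2 : c 2 = (Polynomial.C (V.det⁻¹))^2 * (X * g2) := by
    rw [hck, hNd, coeff5_2, hg2]; ring
  have hc3 : c 3 = (Polynomial.C (V.det⁻¹))^2 * e3 := by
    rw [hck, hNd, coeff5_3, he3]; ring
  have hc4 : c 4 = (Polynomial.C (V.det⁻¹))^2 * e4 := by
    rw [hck, hNd, coeff5_4, he4]
  have hD : D = Polynomial.C ((V.det⁻¹)^12) *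
      ((X:Polynomial F)^8 * (256*X^10*e4^3 - 192*X^7*g1*e3*e4^2 - 128*X^6*g2^2*e4^2
          + 144*X^5*g2*e3^2*e4 - 27*X^4*e3^4 + 144*X^5*g1^2*g2*e4^2
          - 6*X^4*g1^2*e3^2*e4 - 80*X^3*g1*g2^2*e3*e4 + 18*X^2*g1*g2*e3^3
          + 16*X^2*g2^4*e4 - 4*X*g2^3*e3^2 - 27*X^4*g1^4*e4^2
          + 18*X^2*g1^3*g2*e3*e4 - 4*X*g1^3*e3^3 - 4*X*g1^2*g2^3*e4
          + g1^2*g2^2*e3^2)) := by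
    show quarticDisc (c 0) (c 1) (c 2) (c 3) (c 4) = _
    rw [hc0, hc1, hc2, hc3, hc4, disc_homog, disc_factor,
        show ((Polynomial.C (V.det⁻¹))^2)^6 = (Polynomial.C (V.det⁻¹))^12 by ring,
        ← map_pow]
  have hsub2 : ∀ i j, (L * A * Lᵀ) i j = B (![0,1] i) (![0,1] j) := by
    intro i j
    fin_cases i <;> fin_cases j <;>
      simp only [hB, L, Matrix.mul_apply, Matrix.submatrix_apply, Matrix.transpose_apply, id]
  have hsub3 : ∀ i j, (H * A * Hᵀ) i j = B (![0,1,2] i) (![0,1,2] j) := by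
    intro i j
    fin_cases i <;> fin_cases j <;>
      simp only [hB, H, Matrix.mul_apply, Matrix.submatrix_apply, Matrix.transpose_apply, id]
  have hPB : P ⬝ᵥ A.mulVec P = B 0 0 := by
    simp [hB, P, Matrix.mul_apply, dotProduct, Matrix.mulVec, Matrix.transpose_apply,
      Fin.sum_univ_four, Finset.mul_sum, Finset.sum_mul]
    ring
  have hLdet : (L * A * Lᵀ).det = B 0 0 * B 1 1 - B 0 1 * B 1 0 := by
    rw [Matrix.det_fin_two, hsub2, hsub2, hsub2, hsub2]
    simp
  have hHdet : (H * A * Hᵀ).det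
      = B 0 0*(B 1 1*B 2 2 - B 1 2*B 2 1) - B 0 1*(B 1 0*B 2 2 - B 1 2*B 2 0)
        + B 0 2*(B 1 0*B 2 1 - B 1 1*B 2 0) := by
    rw [Matrix.det_fin_three, hsub3, hsub3, hsub3, hsub3, hsub3, hsub3, hsub3, hsub3, hsub3]
    simp
    ring
  constructor
  · intro k hk
    rw [hD, Polynomial.coeff_C_mul, Polynomial.coeff_X_pow_mul']
    rw [if_neg (by omega)]
    ring
  · rw [hD, Polynomial.coeff_C_mul, Polynomial.coeff_X_pow_mul', if_pos (by norm_num),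
        show (8 - 8 : ℕ) = 0 from rfl, Polynomial.coeff_zero_eq_eval_zero]
    simp only [hg1, hg2, he3, he4, eval_add, eval_sub, eval_mul, eval_pow, eval_C, eval_X,
      eval_ofNat, mul_zero, zero_mul, zero_pow, ne_eq, OfNat.ofNat_ne_zero,
      not_false_eq_true, add_zero, zero_add, sub_zero, zero_sub, neg_zero, one_mul, mul_one]
    rw [hPB, hLdet, hHdet]
    ring
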